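/- arXiv:1404.2118 — 2 statements merged into one kernel-verified Lean document; each statement's English description precedes it below -/
import Mathlib

section
/- For every integer d ≥ 2 there is a constant C₇ = C₇(d) ≥ 1 such that for all integers k ≥ 2, with j = ⌊log_{2^d}(k)⌋ and m = k − 2^{dj}, the multinomial coefficient (k−1)! / ( (Π_{i=0}^{j−1} ((2^d − 1)·2^{di})!) · m! ) is at most C₇^{k−1}. -/
lemma choose_le_two_pow' (n r : ℕ) : n.choose r ≤ 2 ^ n := by
  rcases le_or_gt r n with h | h
  · calc n.choose r ≤ ∑ m ∈ Finset.range (n + 1), n.choose m :=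
        Finset.single_le_sum (fun i _ => Nat.zero_le _) (Finset.mem_range.2 (Nat.lt_succ_of_le h))
    _ = 2 ^ n := Nat.sum_range_choose n
  · simp [Nat.choose_eq_zero_of_lt h]

lemma aux_fact (d : ℕ) (hd : 2 ≤ d) : ∀ j : ℕ,
    (2 ^ (d * j) - 1).factorial ≤
      4 ^ (2 ^ (d * j)) * ∏ i ∈ Finset.range j, ((2 ^ d - 1) * 2 ^ (d * i)).factorial := by
  intro j
  induction j with
  | zero => simp [Nat.factorial]
  | succ j ih =>
    set p := 2 ^ (d * j) with hp
    have hp1 : 1 ≤ p := Nat.one_le_two_pow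
    have hq : 2 ^ (d * (j + 1)) = 2 ^ d * p := by
      rw [hp, ← pow_add]; ring_nf
    have hd4 : 4 ≤ 2 ^ d := by
      calc (4 : ℕ) = 2 ^ 2 := rfl
      _ ≤ 2 ^ d := Nat.pow_le_pow_right (by norm_num) hd
    set N := 2 ^ (d * (j + 1)) - 1 with hN
    set a := (2 ^ d - 1) * p with ha
    have haN : a ≤ N := by
      rw [ha, hN, hq, Nat.sub_one_mul]
      omega
    have hple' : p ≤ 2 ^ d * p := Nat.le_mul_of_pos_left p (by omega)
    have hNa : N - a = p - 1 := by
      rw [ha, hN, hq, Nat.sub_one_mul]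
      omega
    have key : N.factorial = N.choose a * a.factorial * (N - a).factorial :=
      (Nat.choose_mul_factorial_mul_factorial haN).symm
    calc N.factorial = N.choose a * a.factorial * (N - a).factorial := key
      _ ≤ 2 ^ N * a.factorial * ((2 ^ (d * j) - 1).factorial) := by
          rw [hNa]
          exact Nat.mul_le_mul (Nat.mul_le_mul_right _ (choose_le_two_pow' N a)) le_rfl
      _ ≤ 2 ^ N * a.factorial *
            (4 ^ (2 ^ (d * j)) * ∏ i ∈ Finset.range j, ((2 ^ d - 1) * 2 ^ (d * i)).factorial) :=
          Nat.mul_le_mul_left _ ih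
      _ = (2 ^ N * 4 ^ p) * (a.factorial * ∏ i ∈ Finset.range j, ((2 ^ d - 1) * 2 ^ (d * i)).factorial) := by
          ring
      _ ≤ 4 ^ (2 ^ (d * (j + 1))) *
            (a.factorial * ∏ i ∈ Finset.range j, ((2 ^ d - 1) * 2 ^ (d * i)).factorial) := by
          gcongr ?_ * _
          have h4 : (4 : ℕ) = 2 ^ 2 := rfl
          rw [h4, ← pow_mul, ← pow_mul, ← pow_add]
          apply Nat.pow_le_pow_right (by norm_num)
          rw [hN, hq]
          have : 2 * p ≤ 2 ^ d * p := Nat.mul_le_mul_right p (by omega)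
          omega
      _ = 4 ^ (2 ^ (d * (j + 1))) * ∏ i ∈ Finset.range (j + 1), ((2 ^ d - 1) * 2 ^ (d * i)).factorial := by
          rw [Finset.prod_range_succ]
          ring
    exact le_rfl

lemma main_nat (d : ℕ) (hd : 2 ≤ d) (k : ℕ) (hk : 2 ≤ k) :
    (k - 1).factorial ≤
      32 ^ (k - 1) *
        ((∏ i ∈ Finset.range (Nat.log (2 ^ d) k), ((2 ^ d - 1) * 2 ^ (d * i)).factorial) *
          (k - 2 ^ (d * Nat.log (2 ^ d) k)).factorial) := by
  set j := Nat.log (2 ^ d) k with hj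
  have hb : 2 ≤ 2 ^ d := by
    calc (2:ℕ) = 2^1 := rfl
    _ ≤ 2 ^ d := Nat.pow_le_pow_right (by norm_num) (by omega)
  have hple : 2 ^ (d * j) ≤ k := by
    have := Nat.pow_log_le_self (2 ^ d) (by omega : k ≠ 0)
    rwa [← pow_mul] at this
  set m := k - 2 ^ (d * j) with hm
  have hp1 : 1 ≤ 2 ^ (d * j) := Nat.one_le_two_pow
  have hmk : m ≤ k - 1 := by omega
  have hsub : k - 1 - m = 2 ^ (d * j) - 1 := by omega
  have key : (k - 1).factorial = (k - 1).choose m * m.factorial * (k - 1 - m).factorial :=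
    (Nat.choose_mul_factorial_mul_factorial hmk).symm
  calc (k - 1).factorial = (k - 1).choose m * m.factorial * (k - 1 - m).factorial := key
    _ ≤ 2 ^ (k - 1) * m.factorial * (2 ^ (d * j) - 1).factorial := by
        rw [hsub]
        exact Nat.mul_le_mul (Nat.mul_le_mul_right _ (choose_le_two_pow' _ _)) le_rfl
    _ ≤ 2 ^ (k - 1) * m.factorial *
          (4 ^ (2 ^ (d * j)) * ∏ i ∈ Finset.range j, ((2 ^ d - 1) * 2 ^ (d * i)).factorial) :=
        Nat.mul_le_mul_left _ (aux_fact d hd j)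
    _ = (2 ^ (k - 1) * 4 ^ (2 ^ (d * j))) *
          ((∏ i ∈ Finset.range j, ((2 ^ d - 1) * 2 ^ (d * i)).factorial) * m.factorial) := by ring
    _ ≤ 32 ^ (k - 1) *
          ((∏ i ∈ Finset.range j, ((2 ^ d - 1) * 2 ^ (d * i)).factorial) * m.factorial) := by
        gcongr ?_ * _
        have h1 : 4 ^ (2 ^ (d * j)) ≤ 4 ^ (2 * (k - 1)) :=
          Nat.pow_le_pow_right (by norm_num) (by omega)
        calc 2 ^ (k - 1) * 4 ^ (2 ^ (d * j)) ≤ 2 ^ (k - 1) * 4 ^ (2 * (k - 1)) :=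
              Nat.mul_le_mul_left _ h1
          _ = 32 ^ (k - 1) := by
              rw [pow_mul]
              rw [← Nat.mul_pow]
              norm_num
  exact le_rfl

/-- inequality (3.3). For every `d ≥ 2` there is `C₇ = C₇(d) ≥ 1`
such that for all `k ≥ 2`, with `j = ⌊log_{2^d} k⌋` and `m = k - 2^{dj}`, the
multinomial coefficient `(k-1)! / ((Π_{i=0}^{j-1} ((2^d-1)·2^{di})!) · m!)`
is at most `C₇^{k-1}`. -/
theorem multinomial_bound (d : ℕ) (hd : 2 ≤ d) :
    ∃ C₇ : ℝ, 1 ≤ C₇ ∧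
      ∀ k : ℕ, 2 ≤ k →
        ((k - 1).factorial : ℝ)
            / (((∏ i ∈ Finset.range (Nat.log (2 ^ d) k),
                  ((2 ^ d - 1) * 2 ^ (d * i)).factorial : ℕ) : ℝ)
                * ((k - 2 ^ (d * Nat.log (2 ^ d) k)).factorial : ℝ))
          ≤ C₇ ^ (k - 1) := by
  refine ⟨32, by norm_num, fun k hk => ?_⟩
  have hpos : (0 : ℝ) <
      ((∏ i ∈ Finset.range (Nat.log (2 ^ d) k), ((2 ^ d - 1) * 2 ^ (d * i)).factorial : ℕ) : ℝ)
        * ((k - 2 ^ (d * Nat.log (2 ^ d) k)).factorial : ℝ) := by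
    apply mul_pos
    · exact_mod_cast Finset.prod_pos fun i _ => (Nat.factorial_pos _)
    · exact_mod_cast Nat.factorial_pos _
  rw [div_le_iff₀ hpos]
  have := main_nat d hd k hk
  calc ((k - 1).factorial : ℝ) ≤
      ((32 ^ (k - 1) *
        ((∏ i ∈ Finset.range (Nat.log (2 ^ d) k), ((2 ^ d - 1) * 2 ^ (d * i)).factorial) *
          (k - 2 ^ (d * Nat.log (2 ^ d) k)).factorial) : ℕ) : ℝ) := by exact_mod_cast this
    _ = (32:ℝ) ^ (k - 1) *
        (((∏ i ∈ Finset.range (Nat.log (2 ^ d) k), ((2 ^ d - 1) * 2 ^ (d * i)).factorial : ℕ) : ℝ)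
          * ((k - 2 ^ (d * Nat.log (2 ^ d) k)).factorial : ℝ)) := by push_cast; ring
    _ = _ := by ring
end

section
/- For every integer d ≥ 2 there is a constant C₇ = C₇(d) ≥ 1 such that for all integers k ≥ 2, with j = ⌊log_{2^d}(k)⌋ and m = k − 2^{dj}, one has 2^{−m(j−1)d} · Π_{i=1}^{j−1} 2^{−d·i·(2^d−1)·2^{id}} ≤ C₇^k · k^{−k}. -/
lemma dyadic_key (q : ℤ) (hq : 2 ≤ q) : ∀ j : ℕ, 1 ≤ j →
    ((j : ℤ) + 1) * q ^ j ≤ 3 * q ^ j + (q - 1) * ∑ i ∈ Finset.Icc 1 (j - 1), (i : ℤ) * q ^ i := by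
  intro j
  induction j with
  | zero => omega
  | succ n ih =>
    intro _
    rcases Nat.eq_zero_or_pos n with hn | hn
    · subst hn; simp; nlinarith
    · have h1 := ih hn
      have hQ : (1 : ℤ) ≤ q ^ n := one_le_pow₀ (by linarith)
      have hIcc : (n + 1 - 1 : ℕ) = (n - 1) + 1 := by omega
      rw [hIcc, Finset.sum_Icc_succ_top (by omega)]
      simp only [Nat.sub_add_cancel hn]
      have hpow : (q : ℤ) ^ (n + 1) = q * q ^ n := by ring
      push_cast
      nlinarith [h1, hQ, mul_le_mul_of_nonneg_right hq (le_trans zero_le_one hQ)]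

/-- inequality (3.4). For every `d ≥ 2` there is `C₇ = C₇(d) ≥ 1`
such that for all `k ≥ 2`, with `j = ⌊log_{2^d} k⌋` and `m = k - 2^{dj}`, one has
`2^{-m(j-1)d} · Π_{i=1}^{j-1} 2^{-d·i·(2^d-1)·2^{id}} ≤ C₇^k · k^{-k}`. -/
theorem dyadic_product_bound (d : ℕ) (hd : 2 ≤ d) :
    ∃ C₇ : ℝ, 1 ≤ C₇ ∧
      ∀ k : ℕ, 2 ≤ k →
        (2 : ℝ) ^ (-(((k - 2 ^ (d * Nat.log (2 ^ d) k) : ℕ) : ℤ)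
              * ((Nat.log (2 ^ d) k : ℤ) - 1) * (d : ℤ)))
            * ∏ i ∈ Finset.Icc 1 (Nat.log (2 ^ d) k - 1),
                (2 : ℝ) ^ (-((d * i * (2 ^ d - 1) * 2 ^ (i * d) : ℕ) : ℤ))
          ≤ C₇ ^ k / (k : ℝ) ^ k := by
  refine ⟨(2 : ℝ) ^ (3 * d), one_le_pow₀ one_le_two, ?_⟩
  intro k hk
  set j := Nat.log (2 ^ d) k with hj
  set m := k - 2 ^ (d * j) with hm
  set S := ∑ i ∈ Finset.Icc 1 (j - 1), d * i * (2 ^ d - 1) * 2 ^ (i * d) with hSdef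
  -- basic facts
  have hq1 : (1 : ℕ) < 2 ^ d := Nat.one_lt_two_pow (by omega)
  have hle : 2 ^ (d * j) ≤ k := by
    have := Nat.pow_log_le_self (2 ^ d) (by omega : k ≠ 0)
    rwa [← pow_mul] at this
  have hlt : k < 2 ^ (d * (j + 1)) := by
    have := Nat.lt_pow_succ_log_self hq1 k
    rwa [← pow_mul] at this
  -- product rewrite
  have hprod : ∏ i ∈ Finset.Icc 1 (j - 1),
      (2 : ℝ) ^ (-((d * i * (2 ^ d - 1) * 2 ^ (i * d) : ℕ) : ℤ))
      = (2 : ℝ) ^ (-(S : ℤ)) := by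
    calc ∏ i ∈ Finset.Icc 1 (j - 1),
          (2 : ℝ) ^ (-((d * i * (2 ^ d - 1) * 2 ^ (i * d) : ℕ) : ℤ))
        = ∏ i ∈ Finset.Icc 1 (j - 1),
            ((2 : ℝ) ^ (d * i * (2 ^ d - 1) * 2 ^ (i * d) : ℕ))⁻¹ := by
          refine Finset.prod_congr rfl (fun i _ => ?_)
          rw [zpow_neg, zpow_natCast]
      _ = (∏ i ∈ Finset.Icc 1 (j - 1),
            (2 : ℝ) ^ (d * i * (2 ^ d - 1) * 2 ^ (i * d) : ℕ))⁻¹ := by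
          rw [Finset.prod_inv_distrib]
      _ = ((2 : ℝ) ^ S)⁻¹ := by rw [Finset.prod_pow_eq_pow_sum]
      _ = (2 : ℝ) ^ (-(S : ℤ)) := by rw [zpow_neg, zpow_natCast]
  have hLHS : (2 : ℝ) ^ (-((m : ℤ) * ((j : ℤ) - 1) * (d : ℤ))) * (2 : ℝ) ^ (-(S : ℤ))
      = (2 : ℝ) ^ (-((m : ℤ) * ((j : ℤ) - 1) * (d : ℤ)) + (-(S : ℤ))) := by
    rw [← zpow_add₀ (two_ne_zero : (2:ℝ) ≠ 0)]
  rw [hprod, hLHS]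
  -- the integer exponent inequality
  have hSZ : (S : ℤ) = (d : ℤ) * ((2 : ℤ) ^ d - 1)
      * ∑ i ∈ Finset.Icc 1 (j - 1), (i : ℤ) * 2 ^ (i * d) := by
    rw [hSdef]
    push_cast [Nat.cast_sub (Nat.one_le_two_pow)]
    rw [Finset.mul_sum]
    exact Finset.sum_congr rfl (fun i _ => by ring)
  have hexp : (d : ℤ) * (j + 1) * k + (-((m : ℤ) * ((j : ℤ) - 1) * (d : ℤ)) + (-(S : ℤ)))
      ≤ 3 * d * k := by
    have hqZ : (2 : ℤ) ≤ 2 ^ d := by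
      calc (2:ℤ) = 2^1 := by ring
      _ ≤ 2 ^ d := pow_le_pow_right₀ one_le_two (by omega)
    have hmZ : (m : ℤ) = (k : ℤ) - 2 ^ (d * j) := by
      rw [hm]; push_cast [Nat.cast_sub hle]; ring
    have hd0 : (0 : ℤ) ≤ (d : ℤ) := by positivity
    rcases Nat.eq_zero_or_pos j with hj0 | hj1
    · -- j = 0 : sum empty, S = 0
      have hS0 : (S : ℤ) = 0 := by rw [hSZ, hj0]; simp
      rw [hj0, hS0, hmZ, hj0]
      have hk2 : (2 : ℤ) ≤ (k : ℤ) := by exact_mod_cast hk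
      have h20 : (2:ℤ) ^ (d * 0) = 1 := by
        rw [Nat.mul_zero, pow_zero]
      rw [h20]
      push_cast
      nlinarith [mul_le_mul_of_nonneg_left (show 2*(k:ℤ)-1 ≤ 3*k by linarith) hd0]
    · have hkey := dyadic_key (2 ^ d) hqZ j hj1
      -- convert q^i = 2^(i*d)
      have hconv : ∀ i : ℕ, ((2:ℤ) ^ d) ^ i = 2 ^ (i * d) := by
        intro i; rw [← pow_mul, mul_comm]
      have hkey' : ((j : ℤ) + 1) * 2 ^ (d * j) ≤ 3 * 2 ^ (d * j)
          + ((2:ℤ) ^ d - 1) * ∑ i ∈ Finset.Icc 1 (j - 1), (i : ℤ) * 2 ^ (i * d) := by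
        have h1 : ((2:ℤ) ^ d) ^ j = 2 ^ (d * j) := by rw [← pow_mul]
        rw [← h1]
        convert hkey using 3
        exact Finset.sum_congr rfl (fun i _ => by rw [hconv i])
      set T := ∑ i ∈ Finset.Icc 1 (j - 1), (i : ℤ) * 2 ^ (i * d) with hT
      have hm0 : (0 : ℤ) ≤ (m : ℤ) := by positivity
      have hjZ : (1 : ℤ) ≤ (j : ℤ) := by exact_mod_cast hj1
      have hinner : ((j : ℤ) + 1) * k ≤ 3 * k + (m : ℤ) * ((j : ℤ) - 1) + ((2:ℤ)^d - 1) * T := by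
        have hkeq : (k : ℤ) = 2 ^ (d * j) + m := by rw [hmZ]; ring
        rw [hkeq]
        nlinarith [hkey', hm0, hjZ]
      rw [hSZ]
      nlinarith [mul_le_mul_of_nonneg_left hinner hd0]
  -- now assemble the real inequality
  have hk0 : (0 : ℝ) < (k : ℝ) ^ k := by positivity
  rw [le_div_iff₀ hk0]
  have hkpow : ((k : ℝ)) ^ k ≤ (2 : ℝ) ^ ((d * (j + 1)) * k) := by
    have h1 : (k : ℝ) ≤ (2 : ℝ) ^ (d * (j + 1)) := by
      have := hlt
      have : (k : ℝ) ≤ ((2 ^ (d * (j + 1)) : ℕ) : ℝ) := by exact_mod_cast this.le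
      simpa using this
    calc (k : ℝ) ^ k ≤ ((2 : ℝ) ^ (d * (j + 1))) ^ k :=
          pow_le_pow_left₀ (by positivity) h1 k
      _ = (2 : ℝ) ^ ((d * (j + 1)) * k) := by rw [← pow_mul]
  have hC : ((2:ℝ) ^ (3 * d)) ^ k = (2:ℝ) ^ (3 * d * k) := by rw [← pow_mul]
  rw [hC]
  calc (2 : ℝ) ^ (-((m : ℤ) * ((j : ℤ) - 1) * (d : ℤ)) + (-(S : ℤ))) * (k : ℝ) ^ k
      ≤ (2 : ℝ) ^ (-((m : ℤ) * ((j : ℤ) - 1) * (d : ℤ)) + (-(S : ℤ))) * (2 : ℝ) ^ ((d * (j + 1)) * k) := by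
        apply mul_le_mul_of_nonneg_left hkpow (by positivity)
    _ = (2 : ℝ) ^ ((-((m : ℤ) * ((j : ℤ) - 1) * (d : ℤ)) + (-(S : ℤ))) + ((d * (j + 1)) * k : ℕ)) := by
        rw [← zpow_natCast (2:ℝ) ((d * (j + 1)) * k), ← zpow_add₀ (two_ne_zero : (2:ℝ) ≠ 0)]
    _ ≤ (2 : ℝ) ^ ((3 * d * k : ℕ) : ℤ) := by
        apply zpow_le_zpow_right₀ one_le_two
        push_cast
        push_cast at hexp
        linarith
    _ = (2 : ℝ) ^ (3 * d * k) := by rw [zpow_natCast]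
end
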